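/- Let P ∈ gl_n(ℂ) be the orthogonal projection onto a k-dimensional subspace V ⊆ ℂⁿ represented by an n×k matrix A of full rank (so P = A(A*A)⁻¹A*). Then the i-th diagonal entry of P equals (Σ_{I∋i} |Δ_I(A)|²) / (Σ_I |Δ_I(A)|²), where the sums run over k-subsets I of [n], i.e., diag(P) equals the Grassmannian moment map image μ_{k,n}(V). -/

import Mathlib

open Matrix BigOperators

noncomputable section

open Equiv Equiv.Perm Finset Function in

private lemma cb_aux {k n : ℕ} {M : Matrix (Fin k) (Fin n) ℂ} {N : Matrix (Fin n) (Fin k) ℂ}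
    {p : Fin k → Fin n} (H : ¬Injective p) :
    (∑ σ : Perm (Fin k), ((sign σ : ℤ) : ℂ) * ∏ x, M (σ x) (p x) * N (p x) x) = 0 := by
  obtain ⟨i, j, hpij, hij⟩ : ∃ i j, p i = p j ∧ i ≠ j := by
    rw [Injective] at H
    push_neg at H
    exact H
  exact
    sum_involution (fun σ _ => σ * Equiv.swap i j)
      (fun σ _ => by
        have : (∏ x, M (σ x) (p x)) = ∏ x, M ((σ * Equiv.swap i j) x) (p x) :=
          Fintype.prod_equiv (swap i j) _ _ (by simp [apply_swap_eq_self hpij])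
        simp [this, sign_swap hij, -sign_swap', prod_mul_distrib])
      (fun σ _ _ => (not_congr mul_swap_eq_iff).mpr hij) (fun _ _ => mem_univ _) fun σ _ =>
      mul_swap_involutive i j σ

open Equiv Equiv.Perm Finset Function in
private lemma cb_sq {k : ℕ} (M N : Matrix (Fin k) (Fin k) ℂ) :
    det (M * N) = ∑ τ : Perm (Fin k), ∑ σ : Perm (Fin k),
      ((sign σ : ℤ) : ℂ) * ∏ i, M (σ i) (τ i) * N (τ i) i :=
  calc
    det (M * N) = ∑ p : Fin k → Fin k, ∑ σ : Perm (Fin k),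
        ((sign σ : ℤ) : ℂ) * ∏ i, M (σ i) (p i) * N (p i) i := by
      simp only [det_apply', Matrix.mul_apply, prod_univ_sum, mul_sum, Fintype.piFinset_univ]
      rw [Finset.sum_comm]
    _ = ∑ p : Fin k → Fin k with Bijective p, ∑ σ : Perm (Fin k),
        ((sign σ : ℤ) : ℂ) * ∏ i, M (σ i) (p i) * N (p i) i := by
      refine (sum_subset (filter_subset _ _) fun f _ hbij ↦ cb_aux ?_).symm
      simp only [mem_filter, mem_univ, true_and] at hbij
      exact fun hinj => hbij (Finite.injective_iff_bijective.mp hinj)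
    _ = ∑ τ : Perm (Fin k), ∑ σ : Perm (Fin k),
        ((sign σ : ℤ) : ℂ) * ∏ i, M (σ i) (τ i) * N (τ i) i :=
      sum_bij (fun p h ↦ Equiv.ofBijective p (mem_filter.1 h).2) (fun _ _ ↦ mem_univ _)
        (fun _ _ _ _ h ↦ by injection h)
        (fun b _ ↦ ⟨b, mem_filter.2 ⟨mem_univ _, b.bijective⟩, coe_fn_injective rfl⟩) fun _ _ ↦ rfl


open Equiv Equiv.Perm Finset Function in
private lemma cb_phi_bij {k n : ℕ} :
    Bijective (fun x : {S : Finset (Fin n) // S.card = k} × Perm (Fin k) =>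
      (⟨fun a => x.1.1.orderEmbOfFin x.1.2 (x.2 a),
        (x.1.1.orderEmbOfFin x.1.2).injective.comp x.2.injective⟩ :
        {p : Fin k → Fin n // Injective p})) := by
  constructor
  · rintro ⟨⟨S, hS⟩, τ⟩ ⟨⟨T, hT⟩, ρ⟩ h
    simp only [Subtype.mk.injEq] at h
    have hST : S = T := by
      have h1 : ∀ (U : Finset (Fin n)) (hU : U.card = k) (σ : Perm (Fin k)),
          Finset.image (fun a => U.orderEmbOfFin hU (σ a)) Finset.univ = U := by
        intro U hU σ
        ext x
        simp only [Finset.mem_image, Finset.mem_univ, true_and]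
        constructor
        · rintro ⟨a, rfl⟩; exact Finset.orderEmbOfFin_mem U hU (σ a)
        · intro hx
          refine ⟨σ.symm ((U.orderIsoOfFin hU).symm ⟨x, hx⟩), ?_⟩
          simp [← Finset.coe_orderIsoOfFin_apply]
      rw [← h1 S hS τ, ← h1 T hT ρ]
      exact Finset.image_congr (fun a _ => congrFun h a)
    subst hST
    have hτ : τ = ρ := Equiv.ext fun a => (S.orderEmbOfFin hS).injective (congrFun h a)
    rw [hτ]
  · rintro ⟨p, hp⟩
    have hS : (Finset.image p Finset.univ).card = k := by
      rw [Finset.card_image_of_injective _ hp, Finset.card_univ, Fintype.card_fin]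
    set S := Finset.image p Finset.univ with hSdef
    have hmem : ∀ a, p a ∈ S := fun a => Finset.mem_image_of_mem p (Finset.mem_univ a)
    have htinj : Injective (fun a => (S.orderIsoOfFin hS).symm ⟨p a, hmem a⟩) := by
      intro a b hab
      apply hp
      have h2 : (⟨p a, hmem a⟩ : {x // x ∈ S}) = ⟨p b, hmem b⟩ :=
        (S.orderIsoOfFin hS).symm.injective hab
      exact Subtype.ext_iff.mp h2
    refine ⟨⟨⟨S, hS⟩, Equiv.ofBijective _ (Finite.injective_iff_bijective.mp htinj)⟩, ?_⟩
    refine Subtype.ext (funext fun a => ?_)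
    show S.orderEmbOfFin hS ((S.orderIsoOfFin hS).symm ⟨p a, hmem a⟩) = p a
    rw [← Finset.coe_orderIsoOfFin_apply]
    simp

open Equiv Equiv.Perm Finset Function in
private lemma cauchyBinet {k n : ℕ} (M : Matrix (Fin k) (Fin n) ℂ) (N : Matrix (Fin n) (Fin k) ℂ) :
    det (M * N) = ∑ S : {S : Finset (Fin n) // S.card = k},
      det (M.submatrix id (fun a => S.1.orderEmbOfFin S.2 a)) *
      det (N.submatrix (fun a => S.1.orderEmbOfFin S.2 a) id) :=
  calc
    det (M * N) = ∑ p : Fin k → Fin n, ∑ σ : Perm (Fin k),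
        ((sign σ : ℤ) : ℂ) * ∏ i, M (σ i) (p i) * N (p i) i := by
      simp only [det_apply', Matrix.mul_apply, prod_univ_sum, mul_sum, Fintype.piFinset_univ]
      rw [Finset.sum_comm]
    _ = ∑ p : Fin k → Fin n with Injective p, ∑ σ : Perm (Fin k),
        ((sign σ : ℤ) : ℂ) * ∏ i, M (σ i) (p i) * N (p i) i := by
      refine (sum_subset (filter_subset _ _) fun f _ hinj ↦ cb_aux ?_).symm
      simpa only [mem_filter, mem_univ, true_and] using hinj
    _ = ∑ q : {p : Fin k → Fin n // Injective p}, ∑ σ : Perm (Fin k),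
        ((sign σ : ℤ) : ℂ) * ∏ i, M (σ i) (q.1 i) * N (q.1 i) i := by
      exact Finset.sum_subtype _ (fun x => by simp) _
    _ = ∑ x : {S : Finset (Fin n) // S.card = k} × Perm (Fin k), ∑ σ : Perm (Fin k),
        ((sign σ : ℤ) : ℂ) * ∏ i, M (σ i) (x.1.1.orderEmbOfFin x.1.2 (x.2 i)) *
          N (x.1.1.orderEmbOfFin x.1.2 (x.2 i)) i :=
      (Fintype.sum_equiv (Equiv.ofBijective _ cb_phi_bij) _ _ fun x => rfl).symm
    _ = ∑ S : {S : Finset (Fin n) // S.card = k}, ∑ τ : Perm (Fin k), ∑ σ : Perm (Fin k),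
        ((sign σ : ℤ) : ℂ) * ∏ i, M (σ i) (S.1.orderEmbOfFin S.2 (τ i)) *
          N (S.1.orderEmbOfFin S.2 (τ i)) i := by
      exact Fintype.sum_prod_type _
    _ = ∑ S : {S : Finset (Fin n) // S.card = k},
        det (M.submatrix id (fun a => S.1.orderEmbOfFin S.2 a)) *
        det (N.submatrix (fun a => S.1.orderEmbOfFin S.2 a) id) := by
      refine Finset.sum_congr rfl fun S _ => ?_
      rw [← Matrix.det_mul, cb_sq]
      rfl

/-- The Plücker coordinate `Δ_S(A)` of the column span of an `n × k` matrix `A`: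
the `k × k` minor of `A` with rows the elements of `S` (in increasing order). -/
def pluckerCoord {n k : ℕ} (A : Matrix (Fin n) (Fin k) ℂ)
    (S : {S : Finset (Fin n) // S.card = k}) : ℂ :=
  (A.submatrix (fun a => S.1.orderEmbOfFin S.2 a) id).det

private lemma gram_det {n k : ℕ} (X : Matrix (Fin n) (Fin k) ℂ) :
    det (Xᴴ * X) = ((∑ S : {S : Finset (Fin n) // S.card = k},
      ‖pluckerCoord X S‖ ^ 2 : ℝ) : ℂ) := by
  rw [cauchyBinet]
  push_cast
  refine Finset.sum_congr rfl fun S _ => ?_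
  have h1 : Xᴴ.submatrix id (fun a => S.1.orderEmbOfFin S.2 a)
      = (X.submatrix (fun a => S.1.orderEmbOfFin S.2 a) id)ᴴ := by
    rw [conjTranspose_submatrix]
  rw [h1, det_conjTranspose]
  have h2 : (X.submatrix (fun a => S.1.orderEmbOfFin S.2 a) id).det = pluckerCoord X S := rfl
  rw [h2, show star (pluckerCoord X S) * pluckerCoord X S
      = pluckerCoord X S * (starRingEnd ℂ) (pluckerCoord X S) from mul_comm _ _,
    Complex.mul_conj, Complex.normSq_eq_norm_sq]
  norm_cast

open ComplexOrder in
private lemma gram_unit {n k : ℕ} (A : Matrix (Fin n) (Fin k) ℂ) (hA : A.rank = k) :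
    IsUnit (Aᴴ * A).det := by
  rw [← Matrix.isUnit_iff_isUnit_det]
  rw [← Matrix.mulVec_surjective_iff_isUnit]
  have hr : (Aᴴ * A).rank = Fintype.card (Fin k) := by
    rw [Matrix.rank_conjTranspose_mul_self, hA, Fintype.card_fin]
  have htop : LinearMap.range (Aᴴ * A).mulVecLin = ⊤ := by
    apply Submodule.eq_top_of_finrank_eq
    rw [show Module.finrank ℂ (LinearMap.range (Aᴴ * A).mulVecLin) = (Aᴴ * A).rank from rfl, hr]
    simp [Module.finrank_pi]
  intro y
  obtain ⟨x, hx⟩ := LinearMap.range_eq_top.mp htop y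
  exact ⟨x, hx⟩

private lemma plucker_updateRow {n k : ℕ} (A : Matrix (Fin n) (Fin k) ℂ) (i : Fin n) (c : ℂ)
    (S : {S : Finset (Fin n) // S.card = k}) :
    pluckerCoord (A.updateRow i (c • A i)) S = (if i ∈ S.1 then c else 1) * pluckerCoord A S := by
  by_cases h : i ∈ S.1
  · rw [if_pos h]
    set j : Fin k := (S.1.orderIsoOfFin S.2).symm ⟨i, h⟩ with hj
    have hfj : S.1.orderEmbOfFin S.2 j = i := by
      rw [← Finset.coe_orderIsoOfFin_apply, hj, OrderIso.apply_symm_apply]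
    have hsub : (A.updateRow i (c • A i)).submatrix (fun a => S.1.orderEmbOfFin S.2 a) id
        = (A.submatrix (fun a => S.1.orderEmbOfFin S.2 a) id).updateRow j
            (c • (A.submatrix (fun a => S.1.orderEmbOfFin S.2 a) id) j) := by
      ext a b
      by_cases haj : a = j
      · subst haj
        simp [submatrix_apply, hfj]
      · have hne : S.1.orderEmbOfFin S.2 a ≠ i := by
          intro hc
          exact haj ((S.1.orderEmbOfFin S.2).injective (by rw [hc, hfj]))
        simp [submatrix_apply, Matrix.updateRow_ne hne, Matrix.updateRow_ne haj]
    show ((A.updateRow i (c • A i)).submatrix (fun a => S.1.orderEmbOfFin S.2 a) id).det = _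
    rw [hsub, det_updateRow_smul, updateRow_eq_self]
    rfl
  · rw [if_neg h, one_mul]
    show ((A.updateRow i (c • A i)).submatrix (fun a => S.1.orderEmbOfFin S.2 a) id).det = _
    congr 1
    ext a b
    have hne : S.1.orderEmbOfFin S.2 a ≠ i := by
      intro hc
      exact h (hc ▸ Finset.orderEmbOfFin_mem S.1 S.2 a)
    simp [submatrix_apply, Matrix.updateRow_ne hne]

/-- if `P = A(A*A)⁻¹A*` is the orthogonal projection onto the column span of
a full-rank `n × k` matrix `A`, then the `i`-th diagonal entry of `P` equals
`(Σ_{S ∋ i} |Δ_S(A)|²) / (Σ_S |Δ_S(A)|²)`, i.e., `diag(P) = μ_{k,n}(V)`. -/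
theorem stmt13 {n k : ℕ} (A : Matrix (Fin n) (Fin k) ℂ) (hA : A.rank = k)
    (P : Matrix (Fin n) (Fin n) ℂ) (hP : P = A * (Aᴴ * A)⁻¹ * Aᴴ) (i : Fin n) :
    P i i =
      (((∑ S : {S : Finset (Fin n) // S.card = k},
          if i ∈ S.1 then ‖pluckerCoord A S‖ ^ 2 else 0) /
        (∑ S : {S : Finset (Fin n) // S.card = k},
          ‖pluckerCoord A S‖ ^ 2) : ℝ) : ℂ) := by
  set d : ℝ := ∑ S : {S : Finset (Fin n) // S.card = k}, ‖pluckerCoord A S‖ ^ 2 with hd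
  set m : ℝ := ∑ S : {S : Finset (Fin n) // S.card = k},
    if i ∈ S.1 then ‖pluckerCoord A S‖ ^ 2 else 0 with hm
  have hu : IsUnit (Aᴴ * A).det := gram_unit A hA
  have hdetG : (Aᴴ * A).det = (d : ℂ) := gram_det A
  set c : ℂ := ((Real.sqrt 2 : ℝ) : ℂ) with hc
  have hcc : (starRingEnd ℂ) c * c = 2 := by
    rw [hc, Complex.conj_ofReal, ← Complex.ofReal_mul,
      Real.mul_self_sqrt (by norm_num : (0:ℝ) ≤ 2)]
    norm_num
  set B : Matrix (Fin n) (Fin k) ℂ := A.updateRow i (c • A i) with hB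
  have hBB : Bᴴ * B = Aᴴ * A +
      replicateCol Unit (fun b => (starRingEnd ℂ) (A i b)) * replicateRow Unit (fun b => A i b) := by
    ext a b
    have hL : (Bᴴ * B) a b = (starRingEnd ℂ) (B i a) * B i b +
        ∑ j ∈ Finset.univ.erase i, (starRingEnd ℂ) (B j a) * B j b := by
      rw [Matrix.mul_apply, ← Finset.add_sum_erase _ _ (Finset.mem_univ i)]
      rfl
    have hR : (Aᴴ * A) a b = (starRingEnd ℂ) (A i a) * A i b +
        ∑ j ∈ Finset.univ.erase i, (starRingEnd ℂ) (A j a) * A j b := by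
      rw [Matrix.mul_apply, ← Finset.add_sum_erase _ _ (Finset.mem_univ i)]
      rfl
    have hrest : ∑ j ∈ Finset.univ.erase i, (starRingEnd ℂ) (B j a) * B j b
        = ∑ j ∈ Finset.univ.erase i, (starRingEnd ℂ) (A j a) * A j b := by
      refine Finset.sum_congr rfl fun j hj => ?_
      rw [hB, Matrix.updateRow_ne (Finset.ne_of_mem_erase hj)]
    have hBi : ∀ b', B i b' = c * A i b' := fun b' => by
      rw [hB, Matrix.updateRow_self]; rfl
    have hcol : (replicateCol Unit (fun b => (starRingEnd ℂ) (A i b)) * replicateRow Unit (fun b => A i b)) a b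
        = (starRingEnd ℂ) (A i a) * A i b := by
      simp [Matrix.mul_apply]
    rw [Matrix.add_apply, hL, hR, hrest, hcol, hBi a, hBi b, _root_.map_mul]
    linear_combination ((starRingEnd ℂ) (A i a) * A i b) * hcc
  have hdetBB : det (Bᴴ * B) = ((d + m : ℝ) : ℂ) := by
    rw [gram_det B]
    norm_cast
    rw [hd, hm, ← Finset.sum_add_distrib]
    refine Finset.sum_congr rfl fun S _ => ?_
    rw [hB, plucker_updateRow]
    by_cases h : i ∈ S.1 <;>
      simp [h, _root_.map_mul, mul_pow, hc, Complex.norm_real, Real.norm_eq_abs,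
        abs_of_nonneg (Real.sqrt_nonneg 2), Real.sq_sqrt (by norm_num : (0:ℝ) ≤ 2)] <;>
      ring
  have hmdl : det (Bᴴ * B) = (Aᴴ * A).det * (1 + P i i) := by
    rw [hBB, Matrix.det_add_replicateCol_mul_replicateRow hu]
    congr 1
    rw [det_unique]
    simp only [Matrix.add_apply, Matrix.one_apply_eq, Matrix.mul_apply, Matrix.replicateRow_apply,
      Matrix.replicateCol_apply, hP, Matrix.conjTranspose_apply]
    congr 1
  have key : (d : ℂ) * (1 + P i i) = ((d + m : ℝ) : ℂ) := by
    rw [← hdetG, ← hmdl, hdetBB]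
  have hd0 : (d : ℂ) ≠ 0 := by
    have := hu.ne_zero
    rwa [hdetG] at this
  have hP2 : P i i = (m : ℂ) / (d : ℂ) := by
    rw [eq_div_iff hd0]
    push_cast at key
    linear_combination key
  rw [hP2]
  push_cast
  ring
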